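/- arXiv:1209.5779 — 2 statements merged into one kernel-verified Lean document; each statement's English description precedes it below -/
import Mathlib

section
/- Assume the random variables w_k, k ∈ W, are square-integrable with mean 0 and variance σ_k², and are pairwise independent. Then for every line (i,j) the variance of the flow is Var(f_ij) = β_ij² · Σ_{k∈W} σ_k² · (π_{ik} − π_{jk} − δ_i + δ_j)². -/
open MeasureTheory ProbabilityTheory BigOperators Finset Matrix

lemma variance_const_add' {Ω : Type*} [MeasureSpace Ω] [IsProbabilityMeasure (ℙ : Measure Ω)]
    (a : ℝ) (X : Ω → ℝ) (hX : MemLp X 2 ℙ) :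
    variance (fun ω => a + X ω) ℙ = variance X ℙ := by
  have h1 : MemLp (fun ω => a + X ω) 2 ℙ := (memLp_const a).add hX
  rw [variance_eq_integral h1.aestronglyMeasurable.aemeasurable,
    variance_eq_integral hX.aestronglyMeasurable.aemeasurable]
  have hInt : ∫ ω, (a + X ω) = a + ∫ ω, X ω :=
    by rw [integral_add (integrable_const a) (hX.integrable one_le_two)]; simp
  congr 1
  funext ω
  simp only [Pi.pow_apply, Pi.sub_apply, hInt]
  ring

/-- If the `w k`, `k ∈ W`, are square-integrable with mean `0` and variance
`σ k ^ 2`, and are pairwise independent, then for every line `(i,j)` the variance of the flow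
is `Var (f i j) = β i j ^ 2 * ∑ k ∈ W, σ k ^ 2 * (π i k - π j k - δ i + δ j) ^ 2`. -/
theorem flow_variance
    {m : ℕ} (hm : 1 ≤ m)
    {Ω : Type*} [MeasureSpace Ω] [IsProbabilityMeasure (ℙ : Measure Ω)]
    (Bhat : Matrix (Fin m) (Fin m) ℝ) (hB : IsUnit Bhat.det)
    (W : Finset (Fin m))
    (w : Fin m → Ω → ℝ) (hwW : ∀ k ∉ W, w k = 0)
    (σ : Fin m → ℝ)
    (hL2 : ∀ k ∈ W, MemLp (w k) 2 ℙ)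
    (hmean : ∀ k ∈ W, ∫ ω, w k ω = 0)
    (hvar : ∀ k ∈ W, variance (w k) ℙ = σ k ^ 2)
    (hindep : ∀ k ∈ W, ∀ l ∈ W, k ≠ l → IndepFun (w k) (w l) ℙ)
    (S : Ω → ℝ) (hS : ∀ ω, S ω = ∑ k ∈ W, w k ω)
    (bbar pbar α : Fin m → ℝ)
    (δ θbar : Fin (m + 1) → ℝ)
    (hδ : δ = Fin.snoc (Bhat⁻¹.mulVec α) 0)
    (hθbar : θbar = Fin.snoc (Bhat⁻¹.mulVec (bbar + pbar)) 0)
    (π : Fin (m + 1) → Fin m → ℝ)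
    (hπ : π = Fin.snoc (fun i j => Bhat⁻¹ i j) 0)
    (θ : Fin (m + 1) → Ω → ℝ)
    (hθ : ∀ ω, (fun i : Fin m => θ i.castSucc ω)
        = Bhat⁻¹.mulVec (fun i => bbar i + pbar i - S ω * α i + w i ω))
    (hθn : ∀ ω, θ (Fin.last m) ω = 0)
    (β : Fin (m + 1) → Fin (m + 1) → ℝ) (hβ : ∀ i j, 0 < β i j)
    (f : Fin (m + 1) → Fin (m + 1) → Ω → ℝ)
    (hf : ∀ i j ω, f i j ω = β i j * (θ i ω - θ j ω)) :
    ∀ i j : Fin (m + 1),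
      variance (f i j) ℙ
        = β i j ^ 2 * ∑ k ∈ W, σ k ^ 2 * (π i k - π j k - δ i + δ j) ^ 2 := by
  have hw0 : ∀ k ∉ W, ∀ ω, w k ω = 0 := fun k hk ω => by rw [hwW k hk]; rfl
  -- key pointwise formula for θ
  have key : ∀ (i : Fin (m + 1)) (ω : Ω),
      θ i ω = θbar i + ∑ k ∈ W, (π i k - δ i) * w k ω := by
    intro i ω
    induction i using Fin.lastCases with
    | last =>
        simp [hθn, hθbar, hπ, hδ, Fin.snoc_last]
    | cast i' =>
        have h := congrFun (hθ ω) i'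
        rw [h, hθbar, hπ, hδ]
        simp only [Fin.snoc_castSucc]
        have hext : ∀ c : Fin m → ℝ,
            ∑ k ∈ W, c k * w k ω = ∑ k, c k * w k ω := fun c =>
          Finset.sum_subset W.subset_univ (fun k _ hk => by rw [hw0 k hk]; ring)
        have hSw : S ω = ∑ k, w k ω := by
          rw [hS ω]
          exact Finset.sum_subset W.subset_univ (fun k _ hk => hw0 k hk ω)
        simp only [Matrix.mulVec, dotProduct, Pi.add_apply]
        rw [hext (fun k => Bhat⁻¹ i' k - ∑ l, Bhat⁻¹ i' l * α l), hSw]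
        have expand1 : ∀ (A P q u : Fin m → ℝ) (s : ℝ),
            ∑ k, A k * (P k - s * q k + u k)
              = ∑ k, A k * P k - s * ∑ k, A k * q k + ∑ k, A k * u k := by
          intro A P q u s
          rw [Finset.mul_sum, ← Finset.sum_sub_distrib, ← Finset.sum_add_distrib]
          exact Finset.sum_congr rfl fun k _ => by ring
        have expand2 : ∀ (A u : Fin m → ℝ) (d : ℝ),
            ∑ k, (A k - d) * u k = ∑ k, A k * u k - d * ∑ k, u k := by
          intro A u d
          rw [Finset.mul_sum, ← Finset.sum_sub_distrib]
          exact Finset.sum_congr rfl fun k _ => by ring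
        rw [expand1 (fun k => Bhat⁻¹ i' k) (fun k => bbar k + pbar k) α (fun k => w k ω),
          expand2 (fun k => Bhat⁻¹ i' k) (fun k => w k ω)]
        ring
  intro i j
  set c : Fin m → ℝ := fun k => π i k - π j k - δ i + δ j with hc
  set g : Fin m → Ω → ℝ := fun k ω => (β i j * c k) * w k ω with hg
  have hfix : f i j = fun ω => β i j * (θbar i - θbar j) + (∑ k ∈ W, g k) ω := by
    funext ω
    simp only [Finset.sum_apply]
    rw [hf i j ω, key i ω, key j ω]
    have h1 : ∑ k ∈ W, g k ω
        = β i j * (∑ k ∈ W, (π i k - δ i) * w k ω - ∑ k ∈ W, (π j k - δ j) * w k ω) := by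
      rw [← Finset.sum_sub_distrib, Finset.mul_sum]
      exact Finset.sum_congr rfl fun k _ => by simp only [hg, hc]; ring
    rw [h1]
    ring
  have hg2 : ∀ k ∈ W, MemLp (g k) 2 ℙ := fun k hk => (hL2 k hk).const_mul _
  have hsumL2 : MemLp (∑ k ∈ W, g k) 2 ℙ := memLp_finset_sum' _ hg2
  have hpair : Set.Pairwise ↑W fun k l => IndepFun (g k) (g l) ℙ := by
    intro k hk l hl hne
    exact (hindep k hk l hl hne).comp
      (measurable_const_mul (β i j * c k)) (measurable_const_mul (β i j * c l))
  rw [hfix, variance_const_add' _ _ hsumL2, IndepFun.variance_sum hg2 hpair,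
    Finset.mul_sum]
  refine Finset.sum_congr rfl fun k hk => ?_
  have : variance (g k) ℙ = (β i j * c k) ^ 2 * variance (w k) ℙ :=
    variance_const_mul (β i j * c k) (w k) ℙ
  rw [this, hvar k hk, hc]
  ring
end

section
/- Let X be a real random variable with distribution N(μ, s²), s > 0, let f^max > 0 and 0 < ε < 1, and write η(ε) = Φ⁻¹(1−ε). (i) If P(|X| > f^max) < ε, then |μ| ≤ f^max − η(ε)·s. (ii) Conversely, if |μ| ≤ f^max − η(ε)·s, then P(|X| > f^max) ≤ 2ε. -/
open MeasureTheory ProbabilityTheory Set Filter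

/-- Standard normal CDF. -/
noncomputable def stdPhi (x : ℝ) : ℝ := (gaussianReal 0 1 (Set.Iic x)).toReal

lemma stdPhi_eq_cdf (x : ℝ) : stdPhi x = cdf (gaussianReal 0 1) x :=
  (cdf_eq_real _ x).symm

lemma stdPhi_nonneg (x : ℝ) : 0 ≤ stdPhi x := by
  rw [stdPhi_eq_cdf]; exact cdf_nonneg _ x

lemma stdPhi_le_one (x : ℝ) : stdPhi x ≤ 1 := by
  rw [stdPhi_eq_cdf]; exact cdf_le_one _ x

lemma stdPhi_eq_integral (x : ℝ) :
    stdPhi x = ∫ t in Set.Iic x, gaussianPDFReal 0 1 t := by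
  rw [stdPhi, gaussianReal_apply_eq_integral 0 one_ne_zero,
    ENNReal.toReal_ofReal (integral_nonneg fun t => gaussianPDFReal_nonneg 0 1 t)]

lemma stdPhi_sub (a b : ℝ) :
    stdPhi b - stdPhi a = ∫ t in a..b, gaussianPDFReal 0 1 t := by
  rw [stdPhi_eq_integral, stdPhi_eq_integral,
    intervalIntegral.integral_Iic_sub_Iic (integrable_gaussianPDFReal 0 1).integrableOn
      (integrable_gaussianPDFReal 0 1).integrableOn]

lemma stdPhi_strictMono : StrictMono stdPhi := by
  intro a b hab
  have h : 0 < ∫ t in a..b, gaussianPDFReal 0 1 t :=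
    intervalIntegral.intervalIntegral_pos_of_pos_on
      ((integrable_gaussianPDFReal 0 1).intervalIntegrable)
      (fun x _ => gaussianPDFReal_pos 0 1 x one_ne_zero) hab
  have := stdPhi_sub a b
  linarith

lemma stdPhi_continuous : Continuous stdPhi := by
  have h : Continuous fun x => (∫ t in (0:ℝ)..x, gaussianPDFReal 0 1 t) + stdPhi 0 :=
    ((integrable_gaussianPDFReal 0 1).continuous_primitive 0).add continuous_const
  convert h using 1
  funext x
  have := stdPhi_sub 0 x
  linarith

lemma stdPhi_surj {y : ℝ} (h0 : 0 < y) (h1 : y < 1) : ∃ x, stdPhi x = y := by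
  have hbot : Tendsto stdPhi atBot (nhds 0) := by
    have := tendsto_cdf_atBot (gaussianReal 0 1)
    refine this.congr fun x => (stdPhi_eq_cdf x).symm
  have htop : Tendsto stdPhi atTop (nhds 1) := by
    have := tendsto_cdf_atTop (gaussianReal 0 1)
    refine this.congr fun x => (stdPhi_eq_cdf x).symm
  obtain ⟨a, ha⟩ := (hbot.eventually_lt_const h0).exists
  obtain ⟨b, hb⟩ := (htop.eventually_const_lt h1).exists
  have hab : a ≤ b := le_of_lt (stdPhi_strictMono.lt_iff_lt.mp (ha.trans hb))
  obtain ⟨x, _, hx⟩ := intermediate_value_Icc hab stdPhi_continuous.continuousOn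
    (Set.mem_Icc.mpr ⟨le_of_lt ha, le_of_lt hb⟩)
  exact ⟨x, hx⟩

lemma map_neg_std : (gaussianReal 0 1).map (fun x : ℝ => -x) = gaussianReal 0 1 := by
  have h := gaussianReal_map_const_mul (μ := 0) (v := 1) (-1)
  have h1 : (fun x : ℝ => -1 * x) = (fun x : ℝ => -x) := by funext x; ring
  have h2 : (NNReal.mk ((-1:ℝ)^2) (sq_nonneg _) * 1 : NNReal) = 1 := by ext; norm_num
  rw [show ((-1 : ℝ) * ·) = (fun x : ℝ => -1 * x) from rfl, h1, h2] at h
  simpa using h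

lemma gaussianReal_Iio_eq_Iic {v : NNReal} (hv : v ≠ 0) (m x : ℝ) :
    gaussianReal m v (Set.Iio x) = gaussianReal m v (Set.Iic x) := by
  refine le_antisymm (measure_mono Set.Iio_subset_Iic_self) ?_
  have hsing : gaussianReal m v {x} = 0 :=
    gaussianReal_absolutelyContinuous m hv (Real.volume_singleton)
  have hsub : Set.Iic x ⊆ Set.Iio x ∪ {x} := by
    intro y hy
    rcases lt_or_eq_of_le (Set.mem_Iic.mp hy) with h | h
    · exact Or.inl h
    · exact Or.inr h
  calc gaussianReal m v (Set.Iic x) ≤ gaussianReal m v (Set.Iio x ∪ {x}) := measure_mono hsub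
    _ ≤ gaussianReal m v (Set.Iio x) + gaussianReal m v {x} := measure_union_le _ _
    _ = gaussianReal m v (Set.Iio x) := by rw [hsing, add_zero]

lemma stdPhi_neg (x : ℝ) : stdPhi (-x) = 1 - stdPhi x := by
  have hmap : gaussianReal 0 1 (Set.Iic (-x)) = gaussianReal 0 1 (Set.Ici x) := by
    conv_lhs => rw [← map_neg_std]
    rw [Measure.map_apply measurable_neg measurableSet_Iic]
    congr 1
    ext y
    simp [neg_le]
  have hcompl : gaussianReal 0 1 (Set.Ici x) = 1 - gaussianReal 0 1 (Set.Iio x) := by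
    rw [← Set.compl_Iio, measure_compl measurableSet_Iio (measure_ne_top _ _), measure_univ]
  rw [stdPhi, hmap, hcompl, gaussianReal_Iio_eq_Iic one_ne_zero,
    ENNReal.toReal_sub_of_le prob_le_one (by norm_num), ENNReal.toReal_one]
  rfl

lemma gaussianReal_Iic_std (m s : ℝ) (hs : 0 < s) (t : ℝ) :
    gaussianReal m (Real.toNNReal (s ^ 2)) (Set.Iic t)
      = gaussianReal 0 1 (Set.Iic ((t - m) / s)) := by
  have hv : (NNReal.mk (s ^ 2) (sq_nonneg s) * 1 : NNReal) = Real.toNNReal (s ^ 2) := by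
    rw [mul_one, Real.toNNReal_of_nonneg (sq_nonneg s)]
  have h1 : (gaussianReal 0 1).map (fun x : ℝ => s * x) = gaussianReal 0 (Real.toNNReal (s ^ 2)) := by
    have h := gaussianReal_map_const_mul (μ := 0) (v := 1) s
    rw [show ((s : ℝ) * ·) = (fun x : ℝ => s * x) from rfl, hv] at h
    simpa using h
  have hmap : (gaussianReal 0 1).map (fun x : ℝ => s * x + m)
      = gaussianReal m (Real.toNNReal (s ^ 2)) := by
    have h2 := gaussianReal_map_add_const (μ := 0) (v := Real.toNNReal (s ^ 2)) m
    calc (gaussianReal 0 1).map (fun x : ℝ => s * x + m)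
        = ((gaussianReal 0 1).map (fun x : ℝ => s * x)).map (· + m) := by
          rw [Measure.map_map (measurable_add_const m) (measurable_const_mul s)]
          rfl
      _ = gaussianReal m (Real.toNNReal (s ^ 2)) := by rw [h1, h2, zero_add]
  rw [← hmap, Measure.map_apply (by fun_prop) measurableSet_Iic]
  congr 1
  ext y
  simp only [Set.mem_preimage, Set.mem_Iic]
  rw [le_div_iff₀ hs]
  constructor <;> intro h <;> nlinarith

/-- Let `X ~ N(μ, s²)` with `s > 0`, `f^max > 0`, `0 < ε < 1`, and
`η ε = Φ⁻¹(1 - ε)`. (i) If `P(|X| > f^max) < ε` then `|μ| ≤ f^max - η ε * s`.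
(ii) Conversely, if `|μ| ≤ f^max - η ε * s` then `P(|X| > f^max) ≤ 2ε`. -/
theorem gaussian_two_sided_chance_bound
    {Ω : Type*} [MeasureSpace Ω] [IsProbabilityMeasure (ℙ : Measure Ω)]
    (X : Ω → ℝ) (μ s : ℝ) (hs : 0 < s)
    (hX : Measure.map X ℙ = gaussianReal μ (Real.toNNReal (s ^ 2)))
    (fmax ε : ℝ) (hfmax : 0 < fmax) (hε0 : 0 < ε) (hε1 : ε < 1)
    (Φ : ℝ → ℝ) (hΦ : ∀ x, Φ x = (gaussianReal 0 1 (Set.Iic x)).toReal)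
    (η : ℝ → ℝ) (hη : ∀ r, η r = Function.invFun Φ (1 - r)) :
    ((ℙ {ω | fmax < |X ω|}).toReal < ε → |μ| ≤ fmax - η ε * s)
    ∧ (|μ| ≤ fmax - η ε * s → (ℙ {ω | fmax < |X ω|}).toReal ≤ 2 * ε) := by
  have hΦfun : Φ = stdPhi := funext fun x => hΦ x
  set v : NNReal := Real.toNNReal (s ^ 2) with hv_def
  have hv : v ≠ 0 := by
    rw [hv_def]
    exact ne_of_gt (Real.toNNReal_pos.mpr (by positivity))
  -- X is a.e.-measurable
  have hXae : AEMeasurable X ℙ := by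
    by_contra h
    rw [Measure.map_of_not_aemeasurable h] at hX
    have := congrArg (fun m : Measure ℝ => m Set.univ) hX
    simp [measure_univ] at this
  -- the c satisfying Φ c = 1 - ε
  set c : ℝ := η ε with hc_def
  have hΦc : stdPhi c = 1 - ε := by
    obtain ⟨x, hx⟩ := stdPhi_surj (by linarith : (0:ℝ) < 1 - ε) (by linarith)
    rw [hc_def, hη, hΦfun]
    exact Function.invFun_eq ⟨x, hx⟩
  set a0 : ℝ := (fmax - μ) / s with ha0_def
  set b0 : ℝ := (-fmax - μ) / s with hb0_def
  -- probability formula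
  have hPform : (ℙ {ω | fmax < |X ω|}).toReal = (1 - stdPhi a0) + stdPhi b0 := by
    have hsetmeas : MeasurableSet {x : ℝ | fmax < |x|} :=
      measurableSet_lt measurable_const continuous_abs.measurable
    have hP : ℙ {ω | fmax < |X ω|} = gaussianReal μ v {x : ℝ | fmax < |x|} := by
      rw [← hX, Measure.map_apply_of_aemeasurable hXae hsetmeas]
      rfl
    have hsplit : {x : ℝ | fmax < |x|} = Set.Iio (-fmax) ∪ Set.Ioi fmax := by
      ext x
      simp only [Set.mem_setOf_eq, Set.mem_union, Set.mem_Iio, Set.mem_Ioi, lt_abs, lt_neg]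
      tauto
    have hdisj : Disjoint (Set.Iio (-fmax)) (Set.Ioi fmax) :=
      (Set.Iio_disjoint_Ici (by linarith)).mono_right Set.Ioi_subset_Ici_self
    have hIio : gaussianReal μ v (Set.Iio (-fmax)) = gaussianReal 0 1 (Set.Iic b0) := by
      rw [gaussianReal_Iio_eq_Iic hv, hv_def, gaussianReal_Iic_std μ s hs, hb0_def]
    have hIoi : (gaussianReal μ v (Set.Ioi fmax)).toReal = 1 - stdPhi a0 := by
      have h1 : gaussianReal μ v (Set.Ioi fmax) = 1 - gaussianReal μ v (Set.Iic fmax) := by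
        rw [← Set.compl_Iic, measure_compl measurableSet_Iic (measure_ne_top _ _), measure_univ]
      rw [h1, ENNReal.toReal_sub_of_le prob_le_one (by norm_num), ENNReal.toReal_one,
        hv_def, gaussianReal_Iic_std μ s hs, ha0_def]
      rfl
    rw [hP, hsplit, measure_union hdisj measurableSet_Ioi,
      ENNReal.toReal_add (measure_ne_top _ _) (measure_ne_top _ _), hIio, hIoi]
    rw [add_comm]
    rfl
  have hΦnegc : stdPhi (-c) = ε := by rw [stdPhi_neg, hΦc]; ring
  constructor
  · -- (i)
    intro hlt
    rw [hPform] at hlt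
    have h1 : 1 - stdPhi a0 < ε := by linarith [stdPhi_nonneg b0]
    have h2 : stdPhi b0 < ε := by linarith [stdPhi_le_one a0]
    have hca : c < a0 := by
      refine stdPhi_strictMono.lt_iff_lt.mp ?_
      rw [hΦc]; linarith
    have hbc : b0 < -c := by
      refine stdPhi_strictMono.lt_iff_lt.mp ?_
      rw [hΦnegc]; exact h2
    have ha : c * s < fmax - μ := by
      rw [ha0_def, lt_div_iff₀ hs] at hca; linarith
    have hb : -fmax - μ < -c * s := by
      rw [hb0_def, div_lt_iff₀ hs] at hbc; linarith
    rw [abs_le]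
    constructor <;> linarith
  · -- (ii)
    intro habs
    rw [abs_le] at habs
    obtain ⟨h1, h2⟩ := habs
    have hca : c ≤ a0 := by
      rw [ha0_def, le_div_iff₀ hs]; linarith
    have hbc : b0 ≤ -c := by
      rw [hb0_def, div_le_iff₀ hs]; linarith
    have hA : 1 - stdPhi a0 ≤ ε := by
      have := stdPhi_strictMono.monotone hca
      rw [hΦc] at this; linarith
    have hB : stdPhi b0 ≤ ε := by
      have := stdPhi_strictMono.monotone hbc
      rwa [hΦnegc] at this
    rw [hPform]
    linarith
end
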